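/- The exact potential P(Θ) = f(Θ) − (α/2) Σ_t Σ_i l_i^t L_{-i}^t satisfies P(Θ) = Σ_t [Σ_i (λ_imp^t l_i^{t+} − λ_exp^t l_i^{t−}) + (α/2)((L^t)^2 + Σ_i (l_i^t)^2)] + Σ_i β p̄_i and hence is convex in Θ. -/

import Mathlib

open Finset

/-- A strategy of a member: positive net loads `l⁺`, negative net loads `l⁻` over the
time horizon, and the auxiliary peak variable `p̄`. -/
abbrev Strat (T : ℕ) : Type := (Fin T → ℝ) × (Fin T → ℝ) × ℝ

/-- Net load `l_i^t = l_i^{t+} - l_i^{t-}`. -/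
def netload {N T : ℕ} (Θ : Fin N → Strat T) (i : Fin N) (t : Fin T) : ℝ :=
  (Θ i).1 t - (Θ i).2.1 t

/-- Aggregate net load `L^t = ∑_i l_i^t`. -/
def aggload {N T : ℕ} (Θ : Fin N → Strat T) (t : Fin T) : ℝ :=
  ∑ i, netload Θ i t

/-- Total community cost `f¹`. -/
def totalCost {N T : ℕ} (lamImp lamExp : Fin T → ℝ) (α β : ℝ)
    (Θ : Fin N → Strat T) : ℝ :=
  (∑ t, ((∑ i, (lamImp t * (Θ i).1 t - lamExp t * (Θ i).2.1 t)) + α * (aggload Θ t) ^ 2))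
    + ∑ i, β * (Θ i).2.2

/-- Exact potential `P = f¹ - (α/2) ∑_t ∑_i l_i^t L_{-i}^t`. -/
noncomputable def potential {N T : ℕ} (lamImp lamExp : Fin T → ℝ) (α β : ℝ)
    (Θ : Fin N → Strat T) : ℝ :=
  totalCost lamImp lamExp α β Θ -
    α / 2 * ∑ t, ∑ i, netload Θ i t * (aggload Θ t - netload Θ i t)


section aux
variable {N T : ℕ}

def lplusLM (i : Fin N) (t : Fin T) : (Fin N → Strat T) →ₗ[ℝ] ℝ :=
  ⟨⟨fun Θ => (Θ i).1 t, fun _ _ => rfl⟩, fun _ _ => rfl⟩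

def lminusLM (i : Fin N) (t : Fin T) : (Fin N → Strat T) →ₗ[ℝ] ℝ :=
  ⟨⟨fun Θ => (Θ i).2.1 t, fun _ _ => rfl⟩, fun _ _ => rfl⟩

def pbarLM (i : Fin N) : (Fin N → Strat T) →ₗ[ℝ] ℝ :=
  ⟨⟨fun Θ => (Θ i).2.2, fun _ _ => rfl⟩, fun _ _ => rfl⟩

def netLM (i : Fin N) (t : Fin T) : (Fin N → Strat T) →ₗ[ℝ] ℝ :=
  lplusLM i t - lminusLM i t

def aggLM (t : Fin T) : (Fin N → Strat T) →ₗ[ℝ] ℝ := ∑ i, netLM i t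

lemma netLM_apply (i : Fin N) (t : Fin T) (Θ : Fin N → Strat T) :
    netLM i t Θ = netload Θ i t := rfl

lemma aggLM_apply (t : Fin T) (Θ : Fin N → Strat T) :
    aggLM t Θ = aggload Θ t := by
  simp [aggLM, aggload, netLM_apply]

lemma sq_linear_convexOn {E : Type*} [AddCommGroup E] [Module ℝ E]
    (g : E →ₗ[ℝ] ℝ) : ConvexOn ℝ Set.univ (fun x => (g x) ^ 2) := by
  simpa [Function.comp_def] using ((even_two.convexOn_pow (𝕜 := ℝ)).comp_affineMap g.toAffineMap)

lemma convexOn_finset_sum {ι E : Type*} [AddCommGroup E] [Module ℝ E]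
    (s : Finset ι) (f : ι → E → ℝ) (h : ∀ i ∈ s, ConvexOn ℝ Set.univ (f i)) :
    ConvexOn ℝ Set.univ (fun x => ∑ i ∈ s, f i x) := by
  classical
  induction s using Finset.cons_induction with
  | empty => simpa using convexOn_const (0 : ℝ) convex_univ
  | cons a s ha ih =>
    simp only [Finset.sum_cons]
    exact (h a (Finset.mem_cons_self a s)).add
      (ih fun i hi => h i (Finset.mem_cons.2 (Or.inr hi)))

end aux

/-- The potential equals
`∑_t [∑_i (λ⁺ l⁺ - λ⁻ l⁻) + (α/2)((L^t)² + ∑_i (l_i^t)²)] + ∑_i β p̄_i`, hence is convex. -/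
theorem stmt10 (N T : ℕ) (α β : ℝ) (hα : 0 < α) (hβ : 0 < β)
    (lamImp lamExp : Fin T → ℝ) :
    (∀ Θ : Fin N → Strat T,
      potential lamImp lamExp α β Θ =
        (∑ t, ((∑ i, (lamImp t * (Θ i).1 t - lamExp t * (Θ i).2.1 t)) +
          α / 2 * ((aggload Θ t) ^ 2 + ∑ i, (netload Θ i t) ^ 2)))
          + ∑ i, β * (Θ i).2.2) ∧
    ConvexOn ℝ Set.univ (potential (N := N) lamImp lamExp α β) := by
  have h1 : ∀ (Θ : Fin N → Strat T) (t : Fin T),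
      ∑ i, netload Θ i t * (aggload Θ t - netload Θ i t)
        = (aggload Θ t) ^ 2 - ∑ i, (netload Θ i t) ^ 2 := by
    intro Θ t
    have h2 : ∑ i, netload Θ i t * (aggload Θ t - netload Θ i t)
        = (∑ i, netload Θ i t) * aggload Θ t - ∑ i, (netload Θ i t) ^ 2 := by
      rw [Finset.sum_mul, ← Finset.sum_sub_distrib]
      exact Finset.sum_congr rfl fun i _ => by ring
    rw [h2, show (∑ i, netload Θ i t) = aggload Θ t from rfl]
    ring
  have key : ∀ Θ : Fin N → Strat T,
      potential lamImp lamExp α β Θ =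
        (∑ t, ((∑ i, (lamImp t * (Θ i).1 t - lamExp t * (Θ i).2.1 t)) +
          α / 2 * ((aggload Θ t) ^ 2 + ∑ i, (netload Θ i t) ^ 2)))
          + ∑ i, β * (Θ i).2.2 := by
    intro Θ
    unfold potential totalCost
    simp only [h1 Θ]
    rw [Finset.mul_sum, add_sub_right_comm, ← Finset.sum_sub_distrib]
    congr 1
    exact Finset.sum_congr rfl fun t _ => by ring
  refine ⟨key, ?_⟩
  have hrep : (potential (N := N) lamImp lamExp α β)
      = fun Θ => ((∑ t, ∑ i, (lamImp t • lplusLM i t - lamExp t • lminusLM i t))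
            + ∑ i, β • pbarLM i : (Fin N → Strat T) →ₗ[ℝ] ℝ) Θ
          + (α / 2) • (∑ t, ((aggLM t Θ) ^ 2 + ∑ i, (netLM i t Θ) ^ 2)) := by
    funext Θ
    rw [key Θ]
    simp only [LinearMap.add_apply, LinearMap.coe_sum, Finset.sum_apply,
      LinearMap.sub_apply, LinearMap.smul_apply, smul_eq_mul,
      lplusLM, lminusLM, pbarLM, LinearMap.coe_mk, AddHom.coe_mk,
      aggLM_apply, netLM_apply]
    rw [Finset.sum_add_distrib, Finset.mul_sum]
    ring
  rw [hrep]
  refine ConvexOn.add (LinearMap.convexOn _ convex_univ) ?_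
  refine ConvexOn.smul (by positivity) ?_
  refine convexOn_finset_sum _ _ fun t _ => ?_
  exact (sq_linear_convexOn (aggLM t)).add
    (convexOn_finset_sum _ _ fun i _ => sq_linear_convexOn (netLM i t))
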